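/- Let k, n be natural numbers with n ≥ 1, and partition [−1,1] into 2^n equal elements I_j = [x_{j−1/2}, x_{j+1/2}) with x_{j+1/2} = −1 + (j+1)·2^{−n+1}. Let u_h : [−1,1] → ℝ restrict to a polynomial of degree at most k on each element I_j. Let ψ : ℝ → ℝ be integrable on [−1,1], vanish outside [−1,1], and have vanishing moments up to order k, and for j = 0,…,2^{n−1}−1 set ψ^{n−1}_j(x) = 2^{(n−1)/2} ψ(2^{n−1}(x+1) − 2j − 1). Then the coefficient d_j = ∫_{−1}^{1} u_h(x) ψ^{n−1}_j(x) dx satisfies d_j = 2^{−(n−1)/2} Σ_{m=0}^{k} c_m · ( u_h^{(m)}(x_{2j+1/2}^+) − u_h^{(m)}(x_{2j+1/2}^−) ), where c_m = (2^{(−n+1)m}/m!) · ∫_{0}^{1} t^m ψ(t) dt and u_h^{(m)}(x^±) denote the one-sided m-th derivatives of u_h at x (i.e. the m-th derivatives of the polynomial pieces on the right and left elements). -/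

import Mathlib

open MeasureTheory Finset

private lemma mw_ae_ne (a : ℝ) : ∀ᵐ x : ℝ, x ≠ a := by
  refine MeasureTheory.ae_iff.mpr ?_
  simp

private lemma mw_taylor (k : ℕ) (p : Polynomial ℝ) (hp : p.natDegree ≤ k) (y x : ℝ) :
    p.eval (y + x) = ∑ m ∈ Finset.range (k + 1),
      (Polynomial.derivative^[m] p).eval y / (m.factorial : ℝ) * x ^ m := by
  have h1 : p.eval (y + x) = (Polynomial.taylor y p).eval x := by
    rw [Polynomial.taylor_eval, add_comm]
  rw [h1, Polynomial.eval_eq_sum_range'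
    (lt_of_le_of_lt (by rw [Polynomial.natDegree_taylor]; exact hp) (Nat.lt_succ_self k)) x]
  refine Finset.sum_congr rfl fun m _ => ?_
  congr 1
  rw [Polynomial.taylor_coeff]
  have h2 : (Polynomial.derivative^[m] p) = m.factorial • Polynomial.hasseDeriv m p := by
    rw [← Polynomial.factorial_smul_hasseDeriv]; rfl
  rw [h2]
  have h3 : ((m.factorial • Polynomial.hasseDeriv m p : Polynomial ℝ)).eval y
      = (m.factorial : ℝ) * (Polynomial.hasseDeriv m p).eval y := by
    simp [nsmul_eq_mul]
  rw [h3]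
  field_simp

private lemma mw_poly_int (k : ℕ) (ψ : ℝ → ℝ) (a b : ℝ) (hψ : IntervalIntegrable ψ volume a b)
    (p : Polynomial ℝ) (hp : p.natDegree ≤ k) (y h : ℝ) :
    ∫ t in a..b, (p.eval (y + h * t)) * ψ t
      = ∑ m ∈ Finset.range (k + 1),
          (Polynomial.derivative^[m] p).eval y / (m.factorial : ℝ) * h ^ m
            * ∫ t in a..b, t ^ m * ψ t := by
  have hint : ∀ m : ℕ, IntervalIntegrable (fun t => t ^ m * ψ t) volume a b :=
    fun m => hψ.continuousOn_mul (Continuous.continuousOn (by continuity))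
  have hpt : ∀ t, (p.eval (y + h * t)) * ψ t
      = ∑ m ∈ Finset.range (k + 1),
          (Polynomial.derivative^[m] p).eval y / (m.factorial : ℝ) * h ^ m * (t ^ m * ψ t) := by
    intro t
    rw [mw_taylor k p hp y (h * t), Finset.sum_mul]
    refine Finset.sum_congr rfl fun m _ => ?_
    ring
  rw [intervalIntegral.integral_congr (fun t _ => hpt t)]
  rw [intervalIntegral.integral_finset_sum (fun m _ => (hint m).const_mul _)]
  exact Finset.sum_congr rfl fun m _ => intervalIntegral.integral_const_mul _ _


set_option maxHeartbeats 1000000 in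
/-- The multiwavelet coefficient on level `n-1` of a piecewise-polynomial DG approximation
on `2^n` equal elements of `[-1,1]` equals a weighted sum of the jumps of the one-sided
derivatives of the approximation at the interior element boundary `x_{2j+1/2}`. -/
theorem multiwavelet_level_coefficient_jump (k n : ℕ) (hn : 1 ≤ n) (ψ uh : ℝ → ℝ)
    (P : ℕ → Polynomial ℝ)
    (hψint : IntegrableOn ψ (Set.Icc (-1) 1))
    (hψsupp : ∀ x : ℝ, x ∉ Set.Icc (-1 : ℝ) 1 → ψ x = 0)
    (hmom : ∀ m ≤ k, ∫ t in (-1 : ℝ)..1, t ^ m * ψ t = 0)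
    (hdeg : ∀ j, (P j).degree ≤ (k : WithBot ℕ))
    -- `uh` restricts to the polynomial `P j` on the element
    -- `I_j = [x_{j-1/2}, x_{j+1/2})` with `x_{j+1/2} = -1 + (j+1) * 2^{-n+1}`:
    (hP : ∀ j : ℕ, j < 2 ^ n → ∀ x ∈ Set.Ico ((-1 : ℝ) + (j : ℝ) * (2 : ℝ) ^ ((1 : ℤ) - (n : ℤ)))
        ((-1 : ℝ) + ((j : ℝ) + 1) * (2 : ℝ) ^ ((1 : ℤ) - (n : ℤ))), uh x = (P j).eval x)
    (j : ℕ) (hj : j < 2 ^ (n - 1)) :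
    -- `d_j = ∫ u_h ψ^{n-1}_j`, where `ψ^{n-1}_j(x) = 2^{(n-1)/2} ψ(2^{n-1}(x+1) - 2j - 1)`
    ∫ x in (-1 : ℝ)..1,
        uh x * ((2 : ℝ) ^ (((n : ℝ) - 1) / 2) * ψ ((2 : ℝ) ^ (n - 1) * (x + 1) - 2 * (j : ℝ) - 1)) =
      (2 : ℝ) ^ (-(((n : ℝ) - 1) / 2)) *
        ∑ m ∈ Finset.range (k + 1),
          ((2 : ℝ) ^ (((1 : ℤ) - (n : ℤ)) * (m : ℤ)) / (m.factorial : ℝ) *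
              ∫ t in (0 : ℝ)..1, t ^ m * ψ t) *
            ((Polynomial.derivative^[m] (P (2 * j + 1))).eval
                ((-1 : ℝ) + ((2 * j : ℝ) + 1) * (2 : ℝ) ^ ((1 : ℤ) - (n : ℤ))) -
             (Polynomial.derivative^[m] (P (2 * j))).eval
                ((-1 : ℝ) + ((2 * j : ℝ) + 1) * (2 : ℝ) ^ ((1 : ℤ) - (n : ℤ)))) := by
  have hn1 : n - 1 + 1 = n := Nat.succ_pred_eq_of_pos hn
  set hs : ℝ := (2 : ℝ) ^ ((1 : ℤ) - (n : ℤ)) with hs_def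
  set c : ℝ := (2 : ℝ) ^ (n - 1) with c_def
  set K : ℝ := (2 : ℝ) ^ (((n : ℝ) - 1) / 2) with K_def
  set xc : ℝ := -1 + (2 * (j : ℝ) + 1) * hs with xc_def
  have hc0 : (0 : ℝ) < c := by rw [c_def]; positivity
  have hs0 : (0 : ℝ) < hs := by rw [hs_def]; positivity
  have hch : c * hs = 1 := by
    rw [hs_def, c_def, ← zpow_natCast (2 : ℝ) (n - 1), ← zpow_add₀ (two_ne_zero)]
    have he : ((n - 1 : ℕ) : ℤ) + (1 - (n : ℤ)) = 0 := by omega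
    rw [he, zpow_zero]
  have hsc : hs = c⁻¹ := eq_inv_of_mul_eq_one_left (by linarith [hch, mul_comm c hs])
  have hjn : 2 * j + 1 < 2 ^ n := by
    have h2 : 2 ^ (n - 1 + 1) = 2 * 2 ^ (n - 1) := pow_succ' 2 (n - 1)
    rw [hn1] at h2
    omega
  set dd : ℝ := c - 2 * (j : ℝ) - 1 with dd_def
  have hkey : ∀ x : ℝ, c * x + dd = c * (x - xc) := by
    intro x; rw [xc_def, dd_def, hsc]; field_simp; ring
  set g : ℝ → ℝ := fun x => if x < xc then (P (2 * j)).eval x else (P (2 * j + 1)).eval x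
    with g_def
  set F : ℝ → ℝ := fun t =>
      (if t < 0 then (P (2 * j)).eval (xc + hs * t) else (P (2 * j + 1)).eval (xc + hs * t)) * ψ t
    with F_def
  have hxarg : ∀ x : ℝ, xc + hs * (c * x + dd) = x := by
    intro x; rw [xc_def, dd_def, hsc]; field_simp; ring
  have hcomp : ∀ x : ℝ, F (c * x + dd) = g x * ψ (c * x + dd) := by
    intro x
    have h2 : (c * x + dd < 0) ↔ x < xc := by
      rw [hkey x]
      constructor <;> intro hx <;> nlinarith
    simp only [F_def, g_def, hxarg x]
    by_cases hx : x < xc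
    · rw [if_pos (h2.mpr hx), if_pos hx]
    · rw [if_neg (fun hh => hx (h2.mp hh)), if_neg hx]
  -- membership helpers
  have e1 : (-1 : ℝ) + (2 * (j : ℝ)) * hs = xc - hs := by rw [xc_def]; ring
  have e2 : (-1 : ℝ) + (2 * (j : ℝ) + 1) * hs = xc := by rw [xc_def]
  have e3 : (-1 : ℝ) + (2 * (j : ℝ) + 1 + 1) * hs = xc + hs := by rw [xc_def]; ring
  -- Step 1
  have step1 : (∫ x in (-1 : ℝ)..1, uh x * (K * ψ (c * (x + 1) - 2 * (j : ℝ) - 1)))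
      = K * ∫ x in (-1 : ℝ)..1, F (c * x + dd) := by
    rw [← intervalIntegral.integral_const_mul]
    apply intervalIntegral.integral_congr_ae
    filter_upwards [mw_ae_ne (xc + hs)] with x hx _
    have hargeq : c * (x + 1) - 2 * (j : ℝ) - 1 = c * x + dd := by rw [dd_def]; ring
    rw [hargeq, hcomp x]
    have huh : uh x * ψ (c * x + dd) = g x * ψ (c * x + dd) := by
      by_cases hlt : x < xc
      · by_cases hge : xc - hs ≤ x
        · have hm : x ∈ Set.Ico ((-1 : ℝ) + ((2 * j : ℕ) : ℝ) * hs)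
              ((-1 : ℝ) + (((2 * j : ℕ) : ℝ) + 1) * hs) := by
            push_cast
            constructor
            · rw [show (-1 : ℝ) + 2 * (j : ℝ) * hs = xc - hs from by rw [xc_def]; ring]
              exact hge
            · rw [show (-1 : ℝ) + (2 * (j : ℝ) + 1) * hs = xc from by rw [xc_def]]
              exact hlt
          rw [hP (2 * j) (by omega) x hm]
          simp only [g_def, if_pos hlt]
        · have harg : c * x + dd < -1 := by
            rw [hkey x]
            push_neg at hge
            have : x - xc < -hs := by linarith
            nlinarith
          rw [hψsupp _ (by intro hmem; exact absurd hmem.1 (by linarith))]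
          ring
      · by_cases hle : x < xc + hs
        · push_neg at hlt
          have hm : x ∈ Set.Ico ((-1 : ℝ) + ((2 * j + 1 : ℕ) : ℝ) * hs)
              ((-1 : ℝ) + (((2 * j + 1 : ℕ) : ℝ) + 1) * hs) := by
            push_cast
            constructor
            · rw [show (-1 : ℝ) + (2 * (j : ℝ) + 1) * hs = xc from by rw [xc_def]]
              exact hlt
            · rw [show (-1 : ℝ) + (2 * (j : ℝ) + 1 + 1) * hs = xc + hs from by rw [xc_def]; ring]
              exact hle
          rw [hP (2 * j + 1) hjn x hm]
          simp only [g_def, if_neg (not_lt.mpr hlt)]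
        · push_neg at hle hlt
          have hlt' : xc + hs < x := lt_of_le_of_ne hle (fun hh => hx hh.symm)
          have harg : 1 < c * x + dd := by
            rw [hkey x]
            have : hs < x - xc := by linarith
            nlinarith
          rw [hψsupp _ (by intro hmem; exact absurd hmem.2 (by linarith))]
          ring
    rw [mul_left_comm, huh]
  -- Step 2: change of variables
  have step2 : (∫ x in (-1 : ℝ)..1, F (c * x + dd))
      = c⁻¹ * ∫ t in (c * (-1) + dd)..(c * 1 + dd), F t := by
    rw [intervalIntegral.integral_comp_mul_add F hc0.ne' dd, smul_eq_mul]
  have hA1 : c * (-1) + dd ≤ -1 := by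
    rw [dd_def]
    have : (0 : ℝ) ≤ (j : ℝ) := Nat.cast_nonneg j
    linarith
  have hB1 : (1 : ℝ) ≤ c * 1 + dd := by
    have hjc : (j : ℝ) + 1 ≤ c := by
      rw [c_def]
      exact_mod_cast Nat.succ_le_of_lt hj
    rw [dd_def]; linarith
  -- integrability of ψ on subintervals
  have hψii : ∀ a b : ℝ, -1 ≤ a → a ≤ b → b ≤ 1 → IntervalIntegrable ψ volume a b := by
    intro a b ha hab hb
    rw [intervalIntegrable_iff]
    refine hψint.mono_set ?_
    refine Set.Subset.trans Set.Ioc_subset_Icc_self ?_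
    exact Set.Icc_subset_Icc (le_min ha (ha.trans hab)) (max_le (hab.trans hb) hb)
  have hcontp : ∀ (p : Polynomial ℝ), Continuous (fun t : ℝ => p.eval (xc + hs * t)) :=
    fun p => p.continuous.comp (continuous_const.add (continuous_const.mul continuous_id))
  -- integrability of F on [-1,0] and [0,1]
  have hint0 : IntervalIntegrable (fun t => (P (2 * j)).eval (xc + hs * t) * ψ t)
      volume (-1) 0 :=
    (hψii (-1) 0 le_rfl (by norm_num) (by norm_num)).continuousOn_mul
      ((hcontp (P (2 * j))).continuousOn)
  have hint1 : IntervalIntegrable (fun t => (P (2 * j + 1)).eval (xc + hs * t) * ψ t)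
      volume 0 1 :=
    (hψii 0 1 (by norm_num) (by norm_num) le_rfl).continuousOn_mul
      ((hcontp (P (2 * j + 1))).continuousOn)
  have hF0 : IntervalIntegrable F volume (-1) 0 := by
    rw [intervalIntegrable_iff] at hint0 ⊢
    refine hint0.congr ?_
    filter_upwards [ae_restrict_of_ae (mw_ae_ne (0 : ℝ)),
      ae_restrict_mem measurableSet_uIoc] with t ht hmem
    rw [Set.uIoc_of_le (by norm_num : (-1 : ℝ) ≤ 0)] at hmem
    have ht0 : t < 0 := lt_of_le_of_ne hmem.2 ht
    simp only [F_def, if_pos ht0]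
  have hF1 : IntervalIntegrable F volume 0 1 := by
    rw [intervalIntegrable_iff] at hint1 ⊢
    refine hint1.congr ?_
    filter_upwards [ae_restrict_mem measurableSet_uIoc] with t hmem
    rw [Set.uIoc_of_le (by norm_num : (0 : ℝ) ≤ 1)] at hmem
    simp only [F_def, if_neg (not_lt.mpr hmem.1.le)]
  have hF : IntervalIntegrable F volume (-1) 1 := hF0.trans hF1
  -- F vanishes (a.e.) outside [-1,1]
  have hFA : IntervalIntegrable F volume (c * (-1) + dd) (-1) := by
    rw [intervalIntegrable_iff]
    refine (integrable_zero _ _ _).congr ?_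
    filter_upwards [ae_restrict_of_ae (mw_ae_ne (-1 : ℝ)),
      ae_restrict_mem measurableSet_uIoc] with t ht hmem
    rw [Set.uIoc_of_le hA1] at hmem
    have ht1 : t < -1 := lt_of_le_of_ne hmem.2 ht
    have hz : ψ t = 0 := hψsupp t (fun hmem2 => absurd hmem2.1 (by linarith))
    simp only [F_def, hz, mul_zero, Pi.zero_apply]
  have hFB : IntervalIntegrable F volume 1 (c * 1 + dd) := by
    rw [intervalIntegrable_iff]
    refine (integrable_zero _ _ _).congr ?_
    filter_upwards [ae_restrict_mem measurableSet_uIoc] with t hmem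
    rw [Set.uIoc_of_le hB1] at hmem
    have hz : ψ t = 0 := hψsupp t (fun hmem2 => absurd hmem2.2 (by linarith [hmem.1]))
    simp only [F_def, hz, mul_zero, Pi.zero_apply]
  have hzero_left : (∫ t in (c * (-1) + dd)..(-1 : ℝ), F t) = 0 := by
    have heq : (∫ t in (c * (-1) + dd)..(-1 : ℝ), F t)
        = ∫ t in (c * (-1) + dd)..(-1 : ℝ), (0 : ℝ) := by
      apply intervalIntegral.integral_congr_ae
      filter_upwards [mw_ae_ne (-1 : ℝ)] with t ht hmem
      rw [Set.uIoc_of_le hA1] at hmem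
      have ht1 : t < -1 := lt_of_le_of_ne hmem.2 ht
      have hz : ψ t = 0 := hψsupp t (fun hmem2 => absurd hmem2.1 (by linarith))
      simp only [F_def, hz, mul_zero]
    rw [heq, intervalIntegral.integral_zero]
  have hzero_right : (∫ t in (1 : ℝ)..(c * 1 + dd), F t) = 0 := by
    have heq : (∫ t in (1 : ℝ)..(c * 1 + dd), F t)
        = ∫ t in (1 : ℝ)..(c * 1 + dd), (0 : ℝ) := by
      apply intervalIntegral.integral_congr_ae
      filter_upwards with t hmem
      rw [Set.uIoc_of_le hB1] at hmem
      have hz : ψ t = 0 := hψsupp t (fun hmem2 => absurd hmem2.2 (by linarith [hmem.1]))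
      simp only [F_def, hz, mul_zero]
    rw [heq, intervalIntegral.integral_zero]
  have step3 : (∫ t in (c * (-1) + dd)..(c * 1 + dd), F t) = ∫ t in (-1 : ℝ)..1, F t := by
    calc (∫ t in (c * (-1) + dd)..(c * 1 + dd), F t)
        = (∫ t in (c * (-1) + dd)..(-1 : ℝ), F t) + ∫ t in (-1 : ℝ)..(c * 1 + dd), F t :=
          (intervalIntegral.integral_add_adjacent_intervals hFA (hF.trans hFB)).symm
      _ = ∫ t in (-1 : ℝ)..(c * 1 + dd), F t := by rw [hzero_left, zero_add]
      _ = (∫ t in (-1 : ℝ)..1, F t) + ∫ t in (1 : ℝ)..(c * 1 + dd), F t :=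
          (intervalIntegral.integral_add_adjacent_intervals hF hFB).symm
      _ = ∫ t in (-1 : ℝ)..1, F t := by rw [hzero_right, add_zero]
  have step4 : (∫ t in (-1 : ℝ)..1, F t)
      = (∫ t in (-1 : ℝ)..0, (P (2 * j)).eval (xc + hs * t) * ψ t)
        + ∫ t in (0 : ℝ)..1, (P (2 * j + 1)).eval (xc + hs * t) * ψ t := by
    rw [← intervalIntegral.integral_add_adjacent_intervals hF0 hF1]
    congr 1
    · apply intervalIntegral.integral_congr_ae
      filter_upwards [mw_ae_ne (0 : ℝ)] with t ht hmem
      rw [Set.uIoc_of_le (by norm_num : (-1 : ℝ) ≤ 0)] at hmem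
      have ht0 : t < 0 := lt_of_le_of_ne hmem.2 ht
      simp only [F_def, if_pos ht0]
    · apply intervalIntegral.integral_congr
      intro t hmem
      rw [Set.uIcc_of_le (by norm_num : (0 : ℝ) ≤ 1)] at hmem
      simp only [F_def, if_neg (not_lt.mpr hmem.1)]
  -- degree bounds
  have hdeg' : ∀ i, (P i).natDegree ≤ k := fun i => Polynomial.natDegree_le_iff_degree_le.mpr (hdeg i)
  have poly0 : (∫ t in (-1 : ℝ)..0, (P (2 * j)).eval (xc + hs * t) * ψ t)
      = ∑ m ∈ Finset.range (k + 1),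
          (Polynomial.derivative^[m] (P (2 * j))).eval xc / (m.factorial : ℝ) * hs ^ m
            * ∫ t in (-1 : ℝ)..0, t ^ m * ψ t :=
    mw_poly_int k ψ (-1) 0 (hψii (-1) 0 le_rfl (by norm_num) (by norm_num))
      (P (2 * j)) (hdeg' _) xc hs
  have poly1 : (∫ t in (0 : ℝ)..1, (P (2 * j + 1)).eval (xc + hs * t) * ψ t)
      = ∑ m ∈ Finset.range (k + 1),
          (Polynomial.derivative^[m] (P (2 * j + 1))).eval xc / (m.factorial : ℝ) * hs ^ m
            * ∫ t in (0 : ℝ)..1, t ^ m * ψ t :=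
    mw_poly_int k ψ 0 1 (hψii 0 1 (by norm_num) (by norm_num) le_rfl)
      (P (2 * j + 1)) (hdeg' _) xc hs
  -- moment flip
  have hflip : ∀ m, m ≤ k → (∫ t in (-1 : ℝ)..0, t ^ m * ψ t)
      = -∫ t in (0 : ℝ)..1, t ^ m * ψ t := by
    intro m hm
    have h1 : IntervalIntegrable (fun t => t ^ m * ψ t) volume (-1) 0 :=
      (hψii (-1) 0 le_rfl (by norm_num) (by norm_num)).continuousOn_mul
        ((continuous_pow m).continuousOn)
    have h2 : IntervalIntegrable (fun t => t ^ m * ψ t) volume 0 1 :=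
      (hψii 0 1 (by norm_num) (by norm_num) le_rfl).continuousOn_mul
        ((continuous_pow m).continuousOn)
    have hadd := intervalIntegral.integral_add_adjacent_intervals h1 h2
    rw [hmom m hm] at hadd
    linarith
  -- constants
  have hKc : K * c⁻¹ = (2 : ℝ) ^ (-(((n : ℝ) - 1) / 2)) := by
    rw [K_def, c_def, ← Real.rpow_natCast (2 : ℝ) (n - 1)]
    have hc1 : ((n - 1 : ℕ) : ℝ) = (n : ℝ) - 1 := by
      push_cast [Nat.cast_sub hn]
      ring
    rw [hc1, ← Real.rpow_neg (by norm_num : (0 : ℝ) ≤ 2),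
      ← Real.rpow_add (by norm_num : (0 : ℝ) < 2)]
    congr 1
    ring
  have hsm : ∀ m : ℕ, hs ^ m = (2 : ℝ) ^ (((1 : ℤ) - (n : ℤ)) * (m : ℤ)) := by
    intro m
    rw [hs_def, ← zpow_natCast ((2 : ℝ) ^ ((1 : ℤ) - (n : ℤ))) m, ← zpow_mul]
  -- assembly
  rw [step1, step2, step3, step4, poly0, poly1, ← Finset.sum_add_distrib, Finset.mul_sum,
    Finset.mul_sum, Finset.mul_sum]
  refine Finset.sum_congr rfl fun m hm => ?_
  rw [hflip m (Nat.lt_succ_iff.mp (Finset.mem_range.mp hm)), ← hKc, ← hsm m]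
  ring
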